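/- arXiv:1710.06211 — 5 statements merged into one kernel-verified Lean document; each statement's English description precedes it below -/
import Mathlib

section
/- Let ν be an odd positive integer and let A_{>0} ⊂ (0,π) be the union over j = 1, …, (ν+1)/2 of the intervals ((2j−2)π/(ν+1), (2j−1)π/(ν+1)). Then the measure of A_{>0} with respect to the Sato–Tate measure (2/π) sin²θ dθ on [0,π] equals 1/2. -/
open Real Finset MeasureTheory Set

lemma aux_sum1 (M : ℕ) (hM : 1 ≤ M) :
    ∑ j ∈ Finset.Icc 1 M,
      Real.sin ((2*(j:ℝ)-2)*Real.pi/(2*M)) * Real.cos ((2*(j:ℝ)-2)*Real.pi/(2*M)) = 0 := by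
  have hM0 : (M:ℝ) ≠ 0 := Nat.cast_ne_zero.mpr (by omega)
  refine Finset.sum_involution (fun j _ => if j = 1 then 1 else M + 2 - j) ?_ ?_ ?_ ?_
  · intro a ha
    by_cases h1 : a = 1
    · simp [h1]
    · simp only [h1, if_false]
      simp only [Finset.mem_Icc] at ha
      have hle : a ≤ M + 2 := by omega
      have hc : ((M + 2 - a : ℕ) : ℝ) = (M:ℝ) + 2 - a := by push_cast [hle]; ring
      have hang : (2*((M + 2 - a : ℕ):ℝ)-2)*π/(2*M) = π - (2*(a:ℝ)-2)*π/(2*M) := by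
        rw [hc]; field_simp; ring
      rw [hang, Real.sin_pi_sub, Real.cos_pi_sub]; ring
  · intro a ha hfa
    by_cases h1 : a = 1
    · exfalso; apply hfa; simp [h1]
    · simp only [h1, if_false]
      intro heq
      simp only [Finset.mem_Icc] at ha
      have h2a : 2 * a = M + 2 := by omega
      apply hfa
      have h2a' : (2:ℝ) * a = (M:ℝ) + 2 := by exact_mod_cast h2a
      have : (2*(a:ℝ)-2)*π/(2*M) = π/2 := by
        rw [show (2*(a:ℝ)-2) = (M:ℝ) by linarith]
        field_simp
      rw [this, Real.cos_pi_div_two, mul_zero]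
  · intro a ha
    simp only [Finset.mem_Icc] at ha
    by_cases h1 : a = 1
    · simp only [h1, if_true]; simp only [Finset.mem_Icc]; omega
    · simp only [h1, if_false, Finset.mem_Icc]; omega
  · intro a ha
    simp only [Finset.mem_Icc] at ha
    by_cases h1 : a = 1
    · simp [h1]
    · simp only [h1, if_false]
      have hne : ¬ (M + 2 - a = 1) := by omega
      simp only [hne, if_false]
      omega

lemma aux_sum2 (M : ℕ) (hM : 1 ≤ M) :
    ∑ j ∈ Finset.Icc 1 M,
      Real.sin ((2*(j:ℝ)-1)*Real.pi/(2*M)) * Real.cos ((2*(j:ℝ)-1)*Real.pi/(2*M)) = 0 := by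
  have hM0 : (M:ℝ) ≠ 0 := Nat.cast_ne_zero.mpr (by omega)
  refine Finset.sum_involution (fun j _ => M + 1 - j) ?_ ?_ ?_ ?_
  · intro a ha
    simp only [Finset.mem_Icc] at ha
    have hle : a ≤ M + 1 := by omega
    have hc : ((M + 1 - a : ℕ) : ℝ) = (M:ℝ) + 1 - a := by push_cast [hle]; ring
    have hang : (2*((M + 1 - a : ℕ):ℝ)-1)*π/(2*M) = π - (2*(a:ℝ)-1)*π/(2*M) := by
      rw [hc]; field_simp; ring
    rw [hang, Real.sin_pi_sub, Real.cos_pi_sub]; ring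
  · intro a ha hfa heq
    simp only [Finset.mem_Icc] at ha
    have heq' : M + 1 - a = a := heq
    have h2a : 2 * a = M + 1 := by omega
    apply hfa
    have h2a' : (2:ℝ) * a = (M:ℝ) + 1 := by exact_mod_cast h2a
    have : (2*(a:ℝ)-1)*π/(2*M) = π/2 := by
      rw [show (2*(a:ℝ)-1) = (M:ℝ) by linarith]
      field_simp
    rw [this, Real.cos_pi_div_two, mul_zero]
  · intro a ha
    simp only [Finset.mem_Icc] at ha
    show M + 1 - a ∈ Finset.Icc 1 M
    simp only [Finset.mem_Icc]; omega
  · intro a ha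
    simp only [Finset.mem_Icc] at ha
    show M + 1 - (M + 1 - a) = a
    omega

theorem stmt_4 (ν : ℕ) (hν : Odd ν) (hpos : 0 < ν) :
    ∫ θ in (⋃ j ∈ Finset.Icc 1 ((ν + 1) / 2),
        Set.Ioo ((2 * (j : ℝ) - 2) * Real.pi / (ν + 1))
          ((2 * (j : ℝ) - 1) * Real.pi / (ν + 1))),
      (2 / Real.pi) * Real.sin θ ^ 2 = 1 / 2 := by
  obtain ⟨k, rfl⟩ := hν
  set M : ℕ := k + 1 with hMdef
  have hdiv : (2 * k + 1 + 1) / 2 = M := by omega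
  have hcast : ((2 * k + 1 : ℕ) : ℝ) + 1 = 2 * (M : ℝ) := by push_cast [hMdef]; ring
  rw [hdiv]
  simp only [hcast]
  have hM : 1 ≤ M := by omega
  have hM0 : (0:ℝ) < (M:ℝ) := by exact_mod_cast hM
  have hπ := Real.pi_pos
  have hab : ∀ j : ℕ, (2*(j:ℝ)-2)*π/(2*(M:ℝ)) ≤ (2*(j:ℝ)-1)*π/(2*(M:ℝ)) := by
    intro j
    apply div_le_div_of_nonneg_right _ (by positivity)
    nlinarith
  have hcont : Continuous fun θ : ℝ => 2/π * Real.sin θ ^ 2 := by continuity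
  rw [MeasureTheory.integral_biUnion_finset]
  rotate_left
  · exact fun j _ => measurableSet_Ioo
  · intro i hi j hj hij
    simp only [Function.onFun]
    rw [Set.Ioo_disjoint_Ioo]
    rcases lt_or_gt_of_ne hij with h | h
    · refine le_trans (min_le_left _ _) (le_trans ?_ (le_max_right _ _))
      apply div_le_div_of_nonneg_right _ (by positivity)
      have : (i:ℝ) + 1 ≤ (j:ℝ) := by exact_mod_cast h
      nlinarith
    · refine le_trans (min_le_right _ _) (le_trans ?_ (le_max_left _ _))
      apply div_le_div_of_nonneg_right _ (by positivity)
      have : (j:ℝ) + 1 ≤ (i:ℝ) := by exact_mod_cast h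
      nlinarith
  · intro j _
    exact (hcont.integrableOn_Icc).mono_set Set.Ioo_subset_Icc_self
  have term : ∀ j ∈ Finset.Icc 1 M,
      (∫ θ in Set.Ioo ((2*(j:ℝ)-2)*π/(2*(M:ℝ))) ((2*(j:ℝ)-1)*π/(2*(M:ℝ))),
        2/π * Real.sin θ ^ 2)
      = (Real.sin ((2*(j:ℝ)-2)*π/(2*(M:ℝ))) * Real.cos ((2*(j:ℝ)-2)*π/(2*(M:ℝ))))/π
        - (Real.sin ((2*(j:ℝ)-1)*π/(2*(M:ℝ))) * Real.cos ((2*(j:ℝ)-1)*π/(2*(M:ℝ))))/π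
        + 1/(2*(M:ℝ)) := by
    intro j _
    rw [← MeasureTheory.integral_Ioc_eq_integral_Ioo,
      ← intervalIntegral.integral_of_le (hab j),
      intervalIntegral.integral_const_mul, integral_sin_sq]
    field_simp
    ring
  rw [Finset.sum_congr rfl term, Finset.sum_add_distrib, Finset.sum_sub_distrib,
    ← Finset.sum_div, ← Finset.sum_div, aux_sum1 M hM, aux_sum2 M hM,
    Finset.sum_const, Nat.card_Icc]
  simp only [zero_div, sub_zero, zero_add, nsmul_eq_mul]
  have : (M + 1 - 1 : ℕ) = M := by omega
  rw [this]
  field_simp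
end

section
/- Let θ be a real number such that θ/(2π) is irrational. Then for every residue class d mod t (t a positive integer), the natural density of the set {ν ∈ ℕ : ν ≡ d (mod t) and sin(νθ) > 0} equals 1/(2t); that is, (1/x)·#{ν ≤ x : ν ≡ d (mod t), sin(νθ) > 0} → 1/(2t) as x → ∞. -/
open scoped Classical
open Filter MeasureTheory Finset AddCircle Real Submodule Topology Set

noncomputable section

namespace Stmt8Aux

instance : Fact ((0:ℝ) < 1) := ⟨one_pos⟩

/-- sample points of the rotation orbit -/
def pt (c α : ℝ) (k : ℕ) : AddCircle (1:ℝ) := ((c + k * α : ℝ) : AddCircle (1:ℝ))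

lemma im_fourier (x : ℝ) :
    (fourier 1 ((x : ℝ) : AddCircle (1:ℝ))).im = Real.sin (2 * π * x) := by
  rw [fourier_coe_apply]
  have : 2 * ↑π * Complex.I * (1:ℤ) * (x:ℂ) / (1:ℝ) = ((2 * π * x : ℝ) : ℂ) * Complex.I := by
    push_cast; ring
  rw [this, Complex.exp_ofReal_mul_I_im]

lemma integral_fourier_eq_zero {n : ℤ} (hn : n ≠ 0) :
    ∫ z : AddCircle (1:ℝ), fourier n z ∂haarAddCircle = 0 := by
  exact integral_eq_zero_of_add_right_eq_neg (μ := haarAddCircle)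
    (fourier_add_half_inv_index hn one_pos)


/-- Birkhoff average property for a complex continuous function. -/
def P (c α : ℝ) (f : C(AddCircle (1:ℝ), ℂ)) : Prop :=
  Tendsto (fun N : ℕ => (N : ℝ)⁻¹ • ∑ k ∈ Finset.range N, f (pt c α k)) atTop
    (𝓝 (∫ z, f z ∂haarAddCircle))

lemma P_fourier {α : ℝ} (hα : Irrational α) (c : ℝ) (n : ℤ) : P c α (fourier n) := by
  rcases eq_or_ne n 0 with rfl | hn
  · have h1 : ∀ N : ℕ, 1 ≤ N →
        (N : ℝ)⁻¹ • ∑ k ∈ Finset.range N, fourier (T := 1) 0 (pt c α k) = 1 := by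
      intro N hN
      simp only [fourier_zero, Finset.sum_const, Finset.card_range, nsmul_eq_mul, mul_one]
      rw [Complex.real_smul]
      push_cast
      exact inv_mul_cancel₀ (Nat.cast_ne_zero.mpr (by omega))
    have h2 : (∫ z, fourier (T := (1:ℝ)) 0 z ∂haarAddCircle) = 1 := by
      simp only [fourier_zero]
      simp [measure_univ]
    rw [P, h2]
    refine Tendsto.congr' ?_ tendsto_const_nhds
    filter_upwards [eventually_ge_atTop 1] with N hN
    exact (h1 N hN).symm
  · rw [P, integral_fourier_eq_zero hn]
    set z : ℂ := Complex.exp (2 * π * Complex.I * n * α) with hz_def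
    set w : ℂ := Complex.exp (2 * π * Complex.I * n * c) with hw_def
    have hzabs : ‖z‖ = 1 := by
      have : 2 * ↑π * Complex.I * n * α = ((2 * π * n * α : ℝ) : ℂ) * Complex.I := by
        push_cast; ring
      rw [hz_def, this, Complex.norm_exp_ofReal_mul_I]
    have hwabs : ‖w‖ = 1 := by
      have : 2 * ↑π * Complex.I * n * c = ((2 * π * n * c : ℝ) : ℂ) * Complex.I := by
        push_cast; ring
      rw [hw_def, this, Complex.norm_exp_ofReal_mul_I]
    have hz1 : z ≠ 1 := by
      intro h
      rw [hz_def, Complex.exp_eq_one_iff] at h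
      obtain ⟨m, hm⟩ := h
      have hpiI : (2 * ↑π * Complex.I : ℂ) ≠ 0 := by
        exact mul_ne_zero (mul_ne_zero two_ne_zero
          (Complex.ofReal_ne_zero.mpr Real.pi_ne_zero)) Complex.I_ne_zero
      have : (n : ℂ) * α = m := by
        have h2 : ((n:ℂ) * α) * (2 * ↑π * Complex.I) = (m:ℂ) * (2 * ↑π * Complex.I) := by
          rw [← hm]; ring
        exact mul_right_cancel₀ hpiI h2
      have : (n : ℝ) * α = m := by exact_mod_cast this
      exact ((hα.intCast_mul hn).ne_int m) this
    have hterm : ∀ k : ℕ, fourier n (pt c α k) = w * z ^ k := by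
      intro k
      rw [pt, fourier_coe_apply, hw_def, hz_def, ← Complex.exp_nat_mul, ← Complex.exp_add]
      congr 1
      push_cast
      ring
    have hsum : ∀ N : ℕ, ∑ k ∈ Finset.range N, fourier n (pt c α k)
        = w * ((z ^ N - 1) / (z - 1)) := by
      intro N
      simp only [hterm, ← Finset.mul_sum, geom_sum_eq hz1]
    have hb : Tendsto (fun N : ℕ => (N : ℝ)⁻¹ * (2 / ‖z - 1‖)) atTop (𝓝 0) := by
      have : Tendsto (fun N : ℕ => (N : ℝ)⁻¹) atTop (𝓝 0) := tendsto_inv_atTop_nhds_zero_nat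
      simpa using this.mul_const (2 / ‖z - 1‖)
    refine squeeze_zero_norm ?_ hb
    · intro N
      rw [hsum, norm_smul, norm_inv, Real.norm_natCast]
      gcongr
      rw [norm_mul, hwabs, one_mul, norm_div]
      gcongr
      calc ‖z ^ N - 1‖ ≤ ‖z ^ N‖ + ‖(1:ℂ)‖ := norm_sub_le _ _
        _ = 2 := by rw [norm_pow, hzabs, one_pow, norm_one]; norm_num


lemma cont_integrable (f : C(AddCircle (1:ℝ), ℂ)) : Integrable f haarAddCircle :=
  (map_continuous f).integrable_of_hasCompactSupport
    (HasCompactSupport.of_compactSpace _)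

lemma P_span {α : ℝ} (hα : Irrational α) (c : ℝ) :
    ∀ f ∈ span ℂ (Set.range (fourier (T := (1:ℝ)))), P c α f := by
  intro f hf
  induction hf using Submodule.span_induction with
  | mem g hg => obtain ⟨n, rfl⟩ := hg; exact P_fourier hα c n
  | zero =>
      simp only [P, ContinuousMap.coe_zero, Pi.zero_apply, Finset.sum_const_zero, smul_zero,
        integral_zero]
      exact tendsto_const_nhds
  | add g h _ _ hg hh =>
      have := hg.add hh
      simp only [P, ContinuousMap.add_apply] at this ⊢
      rw [integral_add (cont_integrable g) (cont_integrable h)]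
      simpa [Finset.sum_add_distrib, smul_add] using this
  | smul a g _ hg =>
      have := hg.const_smul a
      simp only [P, ContinuousMap.smul_apply] at this ⊢
      rw [integral_smul]
      convert this using 2 with N
      rw [← Finset.smul_sum, smul_comm]

lemma birkhoff {α : ℝ} (hα : Irrational α) (c : ℝ) (f : C(AddCircle (1:ℝ), ℂ)) : P c α f := by
  rw [P, Metric.tendsto_nhds]
  intro ε hε
  have hcl : f ∈ closure ((span ℂ (Set.range (fourier (T := (1:ℝ)))) : Submodule ℂ _) : Set _) := by
    have : f ∈ (span ℂ (Set.range (fourier (T := (1:ℝ))))).topologicalClosure := by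
      rw [span_fourier_closure_eq_top]; trivial
    exact this
  rw [Metric.mem_closure_iff] at hcl
  obtain ⟨g, hgmem, hdist⟩ := hcl (ε/3) (by linarith)
  have hPg := P_span hα c g hgmem
  rw [P, Metric.tendsto_nhds] at hPg
  have hfg : ‖f - g‖ < ε/3 := by rwa [← dist_eq_norm]
  filter_upwards [hPg (ε/3) (by linarith), eventually_ge_atTop 1] with N hN hN1
  have hNpos : (0:ℝ) < N := by exact_mod_cast hN1
  -- averages are close
  have havg : ‖((N:ℝ)⁻¹ • ∑ k ∈ Finset.range N, f (pt c α k)) -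
      ((N:ℝ)⁻¹ • ∑ k ∈ Finset.range N, g (pt c α k))‖ ≤ ε/3 := by
    rw [← smul_sub, ← Finset.sum_sub_distrib, norm_smul, norm_inv, Real.norm_natCast]
    have hsum : ‖∑ k ∈ Finset.range N, (f (pt c α k) - g (pt c α k))‖ ≤ N * (ε/3) := by
      calc ‖∑ k ∈ Finset.range N, (f (pt c α k) - g (pt c α k))‖
          ≤ ∑ k ∈ Finset.range N, ‖f (pt c α k) - g (pt c α k)‖ := norm_sum_le _ _
        _ ≤ ∑ k ∈ Finset.range N, ‖f - g‖ := by
            refine Finset.sum_le_sum fun k _ => ?_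
            exact ((f - g).norm_coe_le_norm (pt c α k))
        _ ≤ N * (ε/3) := by
            rw [Finset.sum_const, Finset.card_range, nsmul_eq_mul]
            exact mul_le_mul_of_nonneg_left hfg.le (by positivity)
    calc (N:ℝ)⁻¹ * ‖∑ k ∈ Finset.range N, (f (pt c α k) - g (pt c α k))‖
        ≤ (N:ℝ)⁻¹ * (N * (ε/3)) := by gcongr
      _ = ε/3 := by field_simp
  have hint : ‖(∫ z, g z ∂haarAddCircle) - ∫ z, f z ∂haarAddCircle‖ ≤ ε/3 := by
    rw [← integral_sub (cont_integrable g) (cont_integrable f)]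
    have : ∀ᵐ z ∂(haarAddCircle (T := (1:ℝ))), ‖g z - f z‖ ≤ ε/3 := by
      refine Eventually.of_forall fun z => ?_
      have := (g - f).norm_coe_le_norm z
      have h2 : ‖g - f‖ < ε/3 := by rwa [norm_sub_rev]
      simpa using this.trans h2.le
    have := norm_integral_le_of_norm_le_const this
    simpa [measure_univ] using this
  rw [dist_eq_norm]
  rw [dist_eq_norm] at hN
  calc ‖((N:ℝ)⁻¹ • ∑ k ∈ Finset.range N, f (pt c α k)) - ∫ z, f z ∂haarAddCircle‖
      ≤ ‖((N:ℝ)⁻¹ • ∑ k ∈ Finset.range N, f (pt c α k)) -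
          ((N:ℝ)⁻¹ • ∑ k ∈ Finset.range N, g (pt c α k))‖ +
        ‖((N:ℝ)⁻¹ • ∑ k ∈ Finset.range N, g (pt c α k)) - ∫ z, g z ∂haarAddCircle‖ +
        ‖(∫ z, g z ∂haarAddCircle) - ∫ z, f z ∂haarAddCircle‖ := by
          have key : ((N:ℝ)⁻¹ • ∑ k ∈ Finset.range N, f (pt c α k)) - ∫ z, f z ∂haarAddCircle
              = (((N:ℝ)⁻¹ • ∑ k ∈ Finset.range N, f (pt c α k)) -
                  ((N:ℝ)⁻¹ • ∑ k ∈ Finset.range N, g (pt c α k))) +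
                (((N:ℝ)⁻¹ • ∑ k ∈ Finset.range N, g (pt c α k)) - ∫ z, g z ∂haarAddCircle) +
                ((∫ z, g z ∂haarAddCircle) - ∫ z, f z ∂haarAddCircle) := by abel
          rw [key]
          exact norm_add₃_le
    _ < ε := by linarith


lemma birkhoff_real {α : ℝ} (hα : Irrational α) (c : ℝ) (f : C(AddCircle (1:ℝ), ℝ)) :
    Tendsto (fun N : ℕ => (N : ℝ)⁻¹ * ∑ k ∈ Finset.range N, f (pt c α k)) atTop
      (𝓝 (∫ z, f z ∂haarAddCircle)) := by
  set g : C(AddCircle (1:ℝ), ℂ) := ⟨fun z => (f z : ℂ), Complex.continuous_ofReal.comp (map_continuous f)⟩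
  have h := (Complex.continuous_re.tendsto _).comp (birkhoff hα c g)
  have h1 : (fun N : ℕ => ((N : ℝ)⁻¹ • ∑ k ∈ Finset.range N, g (pt c α k)).re)
      = fun N : ℕ => (N : ℝ)⁻¹ * ∑ k ∈ Finset.range N, f (pt c α k) := by
    funext N
    rw [Complex.real_smul, Complex.mul_re]
    simp only [Complex.ofReal_re, Complex.ofReal_im, zero_mul, sub_zero]
    congr 1
    rw [Complex.re_sum]
    simp [g]
  have h2 : (∫ z, g z ∂haarAddCircle).re = ∫ z, f z ∂haarAddCircle := by
    have : ∫ z, g z ∂(haarAddCircle (T := (1:ℝ))) = ((∫ z, f z ∂haarAddCircle : ℝ) : ℂ) := by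
      exact (integral_ofReal (f := fun z => f z) (μ := haarAddCircle (T := (1:ℝ))))
    rw [this, Complex.ofReal_re]
  rw [Function.comp_def] at h  -- ?
  rw [← h1, ← h2]
  exact h

/-- general dominated-convergence step -/
lemma dct_general (u : ℝ → ℝ) (hu : Continuous u) (J : Set ℝ)
    (hJm : MeasurableSet J) (hsub : J ⊆ Set.Ioc (0:ℝ) 1)
    (hvol : (volume J).toReal = 1/2)
    (hiff : ∀ x ∈ Set.Ioc (0:ℝ) 1, (0 < u x ↔ x ∈ J)) :
    Tendsto (fun m : ℕ => ∫ x in (0:ℝ)..1, max 0 (min 1 ((m:ℝ) * u x))) atTop (𝓝 (1/2)) := by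
  have hrw : ∀ m : ℕ, ∫ x in (0:ℝ)..1, max 0 (min 1 ((m:ℝ) * u x))
      = ∫ x in Set.Ioc (0:ℝ) 1, max 0 (min 1 ((m:ℝ) * u x)) := by
    intro m
    rw [intervalIntegral.integral_of_le zero_le_one]
  simp only [hrw]
  have hlim : ∫ x in Set.Ioc (0:ℝ) 1, Set.indicator J (fun _ => (1:ℝ)) x = 1/2 := by
    rw [integral_indicator hJm]
    rw [Measure.restrict_restrict hJm, Set.inter_eq_self_of_subset_left hsub]
    rw [setIntegral_const]
    simp [Measure.real, hvol]
  rw [← hlim]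
  refine tendsto_integral_of_dominated_convergence (fun _ => (1:ℝ)) ?_ ?_ ?_ ?_
  · intro m
    exact (continuous_const.max (continuous_const.min (continuous_const.mul hu))).aestronglyMeasurable
  · exact integrable_const 1
  · intro m
    refine Eventually.of_forall fun x => ?_
    show ‖max 0 (min 1 ((m:ℝ) * u x))‖ ≤ 1
    rw [Real.norm_eq_abs, abs_le]
    refine ⟨?_, max_le (by norm_num) (min_le_left _ _)⟩
    linarith [le_max_left (0:ℝ) (min 1 ((m:ℝ) * u x))]
  · filter_upwards [ae_restrict_mem measurableSet_Ioc] with x hx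
    rcases (hiff x hx) with hiff'
    by_cases hpos : 0 < u x
    · have hxJ : x ∈ J := hiff'.mp hpos
      rw [Set.indicator_of_mem hxJ]
      obtain ⟨M, hM⟩ := exists_nat_ge (1 / u x)
      refine Tendsto.congr' ?_ tendsto_const_nhds
      filter_upwards [eventually_ge_atTop M] with m hm
      have h1 : (1:ℝ) ≤ (m:ℝ) * u x := by
        rw [div_le_iff₀ hpos] at hM
        calc (1:ℝ) ≤ M * u x := hM
          _ ≤ m * u x := mul_le_mul_of_nonneg_right (by exact_mod_cast hm) hpos.le
      rw [min_eq_left h1, max_eq_right zero_le_one]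
    · have hxJ : x ∉ J := fun h => hpos (hiff'.mpr h)
      rw [Set.indicator_of_notMem hxJ]
      push_neg at hpos
      have : ∀ m : ℕ, max 0 (min 1 ((m:ℝ) * u x)) = 0 := by
        intro m
        have : (m:ℝ) * u x ≤ 0 := mul_nonpos_of_nonneg_of_nonpos (Nat.cast_nonneg m) hpos
        rw [max_eq_left]
        exact (min_le_right _ _).trans this
      simp only [this]
      exact tendsto_const_nhds


lemma sin_shift (x : ℝ) : Real.sin (2 * π * x) = -Real.sin (2 * π * x - π) := by
  have h := Real.sin_add (2 * π * x - π) π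
  simp only [Real.sin_pi, Real.cos_pi, mul_zero, mul_neg_one, add_zero] at h
  have h2 : 2 * π * x - π + π = 2 * π * x := by ring
  rw [h2] at h
  linarith

lemma sin_pos_iff {x : ℝ} (hx : x ∈ Set.Ioc (0:ℝ) 1) :
    0 < Real.sin (2 * π * x) ↔ x ∈ Set.Ioo (0:ℝ) (1/2) := by
  obtain ⟨hx0, hx1⟩ := hx
  constructor
  · intro h
    by_contra hne
    have hge : (1/2 : ℝ) ≤ x := by
      rcases lt_or_ge x (1/2) with h' | h'
      · exact absurd ⟨hx0, h'⟩ hne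
      · exact h'
    have hnn : 0 ≤ Real.sin (2 * π * x - π) :=
      Real.sin_nonneg_of_nonneg_of_le_pi (by nlinarith [Real.pi_pos]) (by nlinarith [Real.pi_pos])
    rw [sin_shift x] at h
    linarith
  · rintro ⟨h0, h2⟩
    exact Real.sin_pos_of_pos_of_lt_pi (by nlinarith [Real.pi_pos]) (by nlinarith [Real.pi_pos])

lemma sin_neg_iff {x : ℝ} (hx : x ∈ Set.Ioc (0:ℝ) 1) :
    0 < -Real.sin (2 * π * x) ↔ x ∈ Set.Ioo (1/2 : ℝ) 1 := by
  obtain ⟨hx0, hx1⟩ := hx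
  constructor
  · intro h
    by_contra hne
    have : x ≤ 1/2 ∨ x = 1 := by
      rcases lt_or_ge (1/2 : ℝ) x with h' | h'
      · right
        rcases lt_or_eq_of_le hx1 with h'' | h''
        · exact absurd ⟨h', h''⟩ hne
        · exact h''
      · left; exact h'
    rcases this with h' | h'
    · have : 0 ≤ Real.sin (2 * π * x) :=
        Real.sin_nonneg_of_nonneg_of_le_pi (by nlinarith [Real.pi_pos]) (by nlinarith [Real.pi_pos])
      linarith
    · rw [h'] at h
      have : Real.sin (2 * π * 1) = 0 := by
        rw [mul_one]; exact Real.sin_two_pi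
      rw [this] at h
      linarith
  · rintro ⟨h0, h2⟩
    rw [sin_shift x]
    have : 0 < Real.sin (2 * π * x - π) :=
      Real.sin_pos_of_pos_of_lt_pi (by nlinarith [Real.pi_pos]) (by nlinarith [Real.pi_pos])
    linarith

/-- minorant -/
def phi (m : ℕ) : C(AddCircle (1:ℝ), ℝ) :=
  ⟨fun z => max 0 (min 1 ((m:ℝ) * (fourier 1 z).im)),
    continuous_const.max (continuous_const.min
      (continuous_const.mul (Complex.continuous_im.comp (map_continuous (fourier 1)))))⟩

/-- majorant -/
def psi (m : ℕ) : C(AddCircle (1:ℝ), ℝ) :=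
  ⟨fun z => 1 - max 0 (min 1 ((m:ℝ) * (-(fourier 1 z).im))),
    continuous_const.sub (continuous_const.max (continuous_const.min
      (continuous_const.mul ((Complex.continuous_im.comp (map_continuous (fourier 1))).neg))))⟩

lemma integral_circle_eq (f : C(AddCircle (1:ℝ), ℝ)) :
    ∫ z, f z ∂haarAddCircle = ∫ x in (0:ℝ)..(1:ℝ), f ((x : ℝ) : AddCircle (1:ℝ)) := by
  have h := AddCircle.intervalIntegral_preimage (1:ℝ) 0 (fun z => f z)
  rw [zero_add] at h
  have hv : (haarAddCircle : Measure (AddCircle (1:ℝ))) = volume := by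
    rw [volume_eq_smul_haarAddCircle]; simp
  rw [hv]
  exact h.symm

lemma integral_phi : Tendsto (fun m : ℕ => ∫ z, phi m z ∂haarAddCircle) atTop (𝓝 (1/2)) := by
  have heq : ∀ m : ℕ, ∫ z, phi m z ∂haarAddCircle
      = ∫ x in (0:ℝ)..1, max 0 (min 1 ((m:ℝ) * Real.sin (2 * π * x))) := by
    intro m
    rw [integral_circle_eq (phi m)]
    congr 1
    funext x
    simp only [phi, ContinuousMap.coe_mk, im_fourier]
  simp only [heq]
  refine dct_general (fun x => Real.sin (2 * π * x)) ?_ (Set.Ioo 0 (1/2))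
    measurableSet_Ioo ?_ ?_ ?_
  · exact Real.continuous_sin.comp (continuous_const.mul continuous_id)
  · intro x hx; exact ⟨hx.1, by linarith [hx.2]⟩
  · rw [Real.volume_Ioo, ENNReal.toReal_ofReal (by norm_num)]; norm_num
  · intro x hx; exact sin_pos_iff hx

lemma integral_psi : Tendsto (fun m : ℕ => ∫ z, psi m z ∂haarAddCircle) atTop (𝓝 (1/2)) := by
  have heq : ∀ m : ℕ, ∫ z, psi m z ∂haarAddCircle
      = 1 - ∫ x in (0:ℝ)..1, max 0 (min 1 ((m:ℝ) * (-Real.sin (2 * π * x)))) := by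
    intro m
    have hint : Integrable (fun z : AddCircle (1:ℝ) =>
        max 0 (min 1 ((m:ℝ) * (-(fourier 1 z).im)))) haarAddCircle := by
      refine Continuous.integrable_of_hasCompactSupport ?_ (HasCompactSupport.of_compactSpace _)
      exact continuous_const.max (continuous_const.min
        (continuous_const.mul ((Complex.continuous_im.comp (map_continuous (fourier 1))).neg)))
    have h1 : ∫ z, psi m z ∂haarAddCircle
        = ∫ z : AddCircle (1:ℝ), (1 - max 0 (min 1 ((m:ℝ) * (-(fourier 1 z).im)))) ∂haarAddCircle := rfl
    rw [h1, integral_sub (integrable_const 1) hint]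
    simp only [integral_const, measure_univ, probReal_univ, ENNReal.toReal_one, smul_eq_mul, one_mul]
    congr 1
    have h2 := integral_circle_eq ⟨fun z => max 0 (min 1 ((m:ℝ) * (-(fourier 1 z).im))),
      continuous_const.max (continuous_const.min
        (continuous_const.mul ((Complex.continuous_im.comp (map_continuous (fourier 1))).neg)))⟩
    simp only [ContinuousMap.coe_mk] at h2
    rw [h2]
    congr 1
    funext x
    rw [im_fourier]
  simp only [heq]
  have hdct : Tendsto (fun m : ℕ => ∫ x in (0:ℝ)..1,
      max 0 (min 1 ((m:ℝ) * (-Real.sin (2 * π * x))))) atTop (𝓝 (1/2)) := by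
    refine dct_general (fun x => -Real.sin (2 * π * x)) ?_ (Set.Ioo (1/2) 1)
      measurableSet_Ioo ?_ ?_ ?_
    · exact (Real.continuous_sin.comp (continuous_const.mul continuous_id)).neg
    · intro x hx; exact ⟨by linarith [hx.1], hx.2.le⟩
    · rw [Real.volume_Ioo, ENNReal.toReal_ofReal (by norm_num)]; norm_num
    · intro x hx; exact sin_neg_iff hx
  have := (tendsto_const_nhds (x := (1:ℝ)) (f := atTop (α := ℕ))).sub hdct
  norm_num at this
  convert this using 2
  norm_num


lemma count_half {α : ℝ} (hα : Irrational α) (c : ℝ) :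
    Tendsto (fun N : ℕ => (((Finset.range N).filter
        (fun k : ℕ => 0 < Real.sin (2 * π * (c + k * α)))).card : ℝ) / N) atTop
      (𝓝 (1/2)) := by
  have him : ∀ k : ℕ, (fourier 1 (pt c α k)).im = Real.sin (2 * π * (c + k * α)) :=
    fun k => im_fourier (c + k * α)
  have hcard : ∀ N : ℕ, (((Finset.range N).filter
      (fun k : ℕ => 0 < Real.sin (2 * π * (c + k * α)))).card : ℝ)
      = ∑ k ∈ Finset.range N, (if 0 < Real.sin (2 * π * (c + k * α)) then (1:ℝ) else 0) := by
    intro N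
    rw [Finset.card_filter]
    push_cast
    rfl
  have hle1 : ∀ m k : ℕ, phi m (pt c α k)
      ≤ (if 0 < Real.sin (2 * π * (c + k * α)) then (1:ℝ) else 0) := by
    intro m k
    simp only [phi, ContinuousMap.coe_mk, him k]
    split_ifs with h
    · exact max_le zero_le_one (min_le_left _ _)
    · push_neg at h
      refine le_of_eq (max_eq_left ?_)
      exact (min_le_right _ _).trans (mul_nonpos_of_nonneg_of_nonpos (Nat.cast_nonneg m) h)
  have hle2 : ∀ m k : ℕ, (if 0 < Real.sin (2 * π * (c + k * α)) then (1:ℝ) else 0)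
      ≤ psi m (pt c α k) := by
    intro m k
    simp only [psi, ContinuousMap.coe_mk, him k]
    split_ifs with h
    · have : (m:ℝ) * (-Real.sin (2 * π * (c + k * α))) ≤ 0 :=
        mul_nonpos_of_nonneg_of_nonpos (Nat.cast_nonneg m) (by linarith)
      rw [max_eq_left ((min_le_right _ _).trans this)]
      norm_num
    · have : max 0 (min 1 ((m:ℝ) * (-Real.sin (2 * π * (c + k * α))))) ≤ 1 :=
        max_le zero_le_one (min_le_left _ _)
      linarith
  rw [Metric.tendsto_nhds]
  intro ε hε
  have a1 := integral_phi; have a2 := integral_psi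
  rw [Metric.tendsto_nhds] at a1 a2
  obtain ⟨m, hm1, hm2⟩ := ((a1 (ε/2) (by linarith)).and (a2 (ε/2) (by linarith))).exists
  rw [Real.dist_eq] at hm1 hm2
  have b1 := birkhoff_real hα c (phi m)
  have b2 := birkhoff_real hα c (psi m)
  rw [Metric.tendsto_nhds] at b1 b2
  filter_upwards [b1 (ε/2) (by linarith), b2 (ε/2) (by linarith)] with N hb1 hb2
  rw [Real.dist_eq] at hb1 hb2 ⊢
  set u : ℝ := (((Finset.range N).filter
      (fun k : ℕ => 0 < Real.sin (2 * π * (c + k * α)))).card : ℝ) / N with hu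
  have hNn : (0:ℝ) ≤ (N:ℝ)⁻¹ := by positivity
  have hAphi : (N:ℝ)⁻¹ * ∑ k ∈ Finset.range N, phi m (pt c α k) ≤ u := by
    rw [hu, div_eq_inv_mul, hcard N]
    exact mul_le_mul_of_nonneg_left (Finset.sum_le_sum fun k _ => hle1 m k) hNn
  have hApsi : u ≤ (N:ℝ)⁻¹ * ∑ k ∈ Finset.range N, psi m (pt c α k) := by
    rw [hu, div_eq_inv_mul, hcard N]
    exact mul_le_mul_of_nonneg_left (Finset.sum_le_sum fun k _ => hle2 m k) hNn
  rw [abs_lt] at hm1 hm2 hb1 hb2 ⊢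
  constructor <;> [linarith [hAphi, hb1.1, hm1.1]; linarith [hApsi, hb2.2, hm2.2]]


end Stmt8Aux

open Stmt8Aux in

theorem stmt_8 (θ : ℝ) (hirr : Irrational (θ / (2 * Real.pi)))
    (t : ℕ) (ht : 0 < t) (d : ℕ) :
    Filter.Tendsto (fun x : ℕ =>
        (((Finset.range (x + 1)).filter
            (fun ν => ν % t = d % t ∧ 0 < Real.sin (ν * θ))).card : ℝ) / (x : ℝ))
      Filter.atTop (nhds (1 / (2 * (t : ℝ)))) := by
  set r : ℕ := d % t with hr_def
  have hr : r < t := Nat.mod_lt _ ht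
  set α : ℝ := (t : ℝ) * (θ / (2 * π)) with hα_def
  set c : ℝ := (r : ℝ) * (θ / (2 * π)) with hc_def
  have hα : Irrational α := hirr.natCast_mul ht.ne'
  have harg : ∀ k : ℕ, ((r + t * k : ℕ) : ℝ) * θ = 2 * π * (c + k * α) := by
    intro k
    push_cast
    rw [hc_def, hα_def]
    field_simp
  set K : ℕ → ℕ := fun x => (x - r) / t + 1 with hK_def
  -- card equality
  have hcard : ∀ x : ℕ, r ≤ x →
      ((Finset.range (x + 1)).filter
        (fun ν => ν % t = r ∧ 0 < Real.sin (ν * θ))).card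
      = ((Finset.range (K x)).filter
        (fun k : ℕ => 0 < Real.sin (2 * π * (c + k * α)))).card := by
    intro x hrx
    refine Finset.card_nbij' (fun ν => ν / t) (fun k => r + t * k) ?_ ?_ ?_ ?_
    · intro ν hν
      rw [Finset.mem_coe, Finset.mem_filter, Finset.mem_range] at hν
      obtain ⟨hν1, hν2, hν3⟩ := hν
      have hdiv : r + t * (ν / t) = ν := by
        conv_rhs => rw [← Nat.mod_add_div ν t, hν2]
      simp only [Finset.mem_coe, Finset.mem_filter, Finset.mem_range, hK_def]
      have h1 : (ν - r) / t ≤ (x - r) / t := Nat.div_le_div_right (by omega)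
      have h2 : ν - r = t * (ν / t) := by omega
      have h3 : (ν - r) / t = ν / t := by rw [h2, Nat.mul_div_cancel_left _ ht]
      refine ⟨by omega, ?_⟩
      rw [← hdiv] at hν3
      rw [harg (ν / t)] at hν3
      exact hν3
    · intro k hk
      simp only [Finset.mem_coe, Finset.mem_filter, Finset.mem_range, hK_def] at hk
      obtain ⟨hk1, hk2⟩ := hk
      have hkle : k ≤ (x - r) / t := by omega
      have hmul : t * k ≤ t * ((x - r) / t) := Nat.mul_le_mul_left _ hkle
      have hdm : t * ((x - r) / t) ≤ x - r := by rw [Nat.mul_comm]; exact Nat.div_mul_le_self _ _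
      have h1 : t * k ≤ x - r := by omega
      simp only [Finset.mem_coe, Finset.mem_filter, Finset.mem_range]
      refine ⟨by omega, ?_, ?_⟩
      · rw [Nat.add_mul_mod_self_left, Nat.mod_eq_of_lt hr]
      · rw [show ((r + t * k : ℕ) : ℝ) * θ = 2 * π * (c + k * α) from harg k]
        exact hk2
    · intro ν hν
      rw [Finset.mem_coe, Finset.mem_filter] at hν
      show r + t * (ν / t) = ν
      conv_rhs => rw [← Nat.mod_add_div ν t, hν.2.1]
    · intro k hk
      show (r + t * k) / t = k
      rw [Nat.add_mul_div_left _ _ ht, Nat.div_eq_of_lt hr, Nat.zero_add]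
  -- K tends to infinity
  have hKtend : Tendsto K atTop atTop := by
    rw [tendsto_atTop_atTop]
    intro b
    refine ⟨r + t * b, fun a ha => ?_⟩
    have : t * b ≤ a - r := by omega
    have : b ≤ (a - r) / t := Nat.le_div_iff_mul_le ht |>.mpr (by rw [Nat.mul_comm]; omega)
    simp only [hK_def]
    omega
  -- ratio of K x to x
  have hKratio : Tendsto (fun x : ℕ => (K x : ℝ) / x) atTop (𝓝 (1 / t)) := by
    have herr : ∀ x : ℕ, r ≤ x → |(K x : ℝ) - (x : ℝ) / t| ≤ (r : ℝ) + t + 1 := by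
      intro x hrx
      have hmod := Nat.div_add_mod (x - r) t
      have hcast : ((x - r : ℕ) : ℝ) = (x : ℝ) - r := by
        push_cast [Nat.cast_sub hrx]; ring
      have h1 : (t : ℝ) * (((x - r) / t : ℕ) : ℝ) + (((x - r) % t : ℕ) : ℝ) = (x : ℝ) - r := by
        rw [← hcast]; exact_mod_cast hmod
      have h2 : (((x - r) % t : ℕ) : ℝ) < t := by exact_mod_cast Nat.mod_lt _ ht
      have h3 : (0:ℝ) ≤ (((x - r) % t : ℕ) : ℝ) := Nat.cast_nonneg _
      have htpos : (0:ℝ) < t := by exact_mod_cast ht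
      have hKx : (K x : ℝ) = (((x - r) / t : ℕ) : ℝ) + 1 := by
        simp only [hK_def]; push_cast; ring
      have hx_eq : (x:ℝ) = t * (((x - r)/t : ℕ):ℝ) + (((x-r)%t : ℕ):ℝ) + r := by linarith
      have hdivle : ((((x-r)%t : ℕ):ℝ) + r) / t ≤ (((x-r)%t : ℕ):ℝ) + r :=
        div_le_self (by positivity) (by exact_mod_cast ht)
      have hdivnn : (0:ℝ) ≤ ((((x-r)%t:ℕ):ℝ) + r)/t := by positivity
      have hxt : (x:ℝ)/t = (((x-r)/t:ℕ):ℝ) + ((((x-r)%t:ℕ):ℝ) + r)/t := by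
        rw [hx_eq]; field_simp; ring
      have hrnn : (0:ℝ) ≤ r := Nat.cast_nonneg r
      have ht1 : (1:ℝ) ≤ t := by exact_mod_cast ht
      rw [hKx, hxt, abs_le]
      constructor <;> linarith
    have hdiff : Tendsto (fun x : ℕ => ((K x : ℝ) - (x : ℝ) / t) / x) atTop (𝓝 0) := by
      have hb : Tendsto (fun x : ℕ => ((r : ℝ) + t + 1) / x) atTop (𝓝 0) :=
        tendsto_const_div_atTop_nhds_zero_nat _
      refine squeeze_zero_norm' ?_ hb
      · filter_upwards [eventually_ge_atTop r, eventually_ge_atTop 1] with x hx hx1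
        rw [Real.norm_eq_abs, abs_div, abs_of_nonneg (by positivity : (0:ℝ) ≤ (x:ℝ))]
        have hxpos : (0:ℝ) < x := by exact_mod_cast hx1
        gcongr
        exact herr x hx
    have : Tendsto (fun x : ℕ => 1 / (t:ℝ) + ((K x : ℝ) - (x : ℝ) / t) / x) atTop
        (𝓝 (1 / t + 0)) := tendsto_const_nhds.add hdiff
    rw [add_zero] at this
    refine this.congr' ?_
    filter_upwards [eventually_ge_atTop 1] with x hx1
    have hxne : (x : ℝ) ≠ 0 := by positivity
    field_simp
    ring
  -- assemble
  have hmain : Tendsto (fun x : ℕ =>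
      ((((Finset.range (K x)).filter
        (fun k : ℕ => 0 < Real.sin (2 * π * (c + k * α)))).card : ℝ) / (K x)) * ((K x : ℝ) / x))
      atTop (𝓝 ((1/2) * (1/t))) :=
    ((count_half hα c).comp hKtend).mul hKratio
  have hfinal : (1/2 : ℝ) * (1/t) = 1 / (2 * t) := by
    rw [div_mul_div_comm, one_mul]
  rw [hfinal] at hmain
  refine hmain.congr' ?_
  filter_upwards [eventually_ge_atTop r, eventually_ge_atTop 1] with x hx hx1
  have hKne : ((K x : ℕ) : ℝ) ≠ 0 := by
    have h1 : 1 ≤ K x := by simp only [hK_def]; exact Nat.succ_le_succ (Nat.zero_le _)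
    exact Nat.cast_ne_zero.mpr (by omega)
  have hxne : (x : ℝ) ≠ 0 := by
    have : (0:ℝ) < x := by exact_mod_cast hx1
    exact this.ne'
  rw [← hcard x hx]
  field_simp
  simp_rw [mul_comm θ]
end
end

section
/- Let λ, w, ζ be complex numbers with |ζ| = 1, λ/ζ real, and suppose the polynomial 1 − λX + ζ²w²X² factors as (1 − αX)(1 − βX) with |α| = |β| = |w| and w real positive. If moreover α/ζ is real, then λ = ±2wζ. -/
theorem stmt_13 (lam w ζ α β : ℂ) (hζ : ‖ζ‖ = 1)
    (hlamreal : (lam / ζ).im = 0)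
    (hwreal : w.im = 0) (hwpos : 0 < w.re)
    (hsum : α + β = lam) (hprod : α * β = ζ ^ 2 * w ^ 2)
    (hαabs : ‖α‖ = ‖w‖) (hβabs : ‖β‖ = ‖w‖)
    (hαreal : (α / ζ).im = 0) :
    lam = 2 * w * ζ ∨ lam = -(2 * w * ζ) := by
  have hζ0 : ζ ≠ 0 := by
    intro h; rw [h] at hζ; simp at hζ
  have hw : w = (w.re : ℂ) := by
    apply Complex.ext <;> simp [hwreal]
  have hwabs : ‖w‖ = w.re := by
    rw [hw]; simp [Complex.norm_real, abs_of_pos hwpos]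
  set a := α / ζ with ha
  have haC : a = (a.re : ℂ) := by
    apply Complex.ext <;> simp [hαreal]
  have habs : ‖a‖ = w.re := by
    rw [ha, norm_div, hζ, div_one, hαabs, hwabs]
  have habsre : |a.re| = w.re := by
    rw [haC] at habs; simpa using habs
  have hα : α = a * ζ := by rw [ha, div_mul_cancel₀ α hζ0]
  have hα0 : α ≠ 0 := by
    intro h
    rw [h] at hαabs
    simp [hwabs] at hαabs
    exact absurd hαabs.symm (ne_of_gt hwpos)
  rcases (abs_eq hwpos.le).mp habsre with h | h
  · have hα' : α = w * ζ := by rw [hα, haC, h, ← hw]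
    have hβ : β = α := mul_left_cancel₀ hα0 (by rw [hprod, hα']; ring)
    left
    rw [← hsum, hβ, hα']; ring
  · have hα' : α = -(w * ζ) := by
      rw [hα, haC, h]; push_cast; simp [Complex.ofReal_re]; exact Or.inl hw.symm
    have hβ : β = α := mul_left_cancel₀ hα0 (by rw [hprod, hα']; ring)
    right
    rw [← hsum, hβ, hα']; ring
end

section
/- Let f : ℕ → ℝ be defined by f(ν) = sin((ν+1)θ)/sin(θ) · c(ν) where θ ∈ (0,π) with θ/(2π) irrational and c : ℕ → ℝ is a nonzero periodic sequence. Then f changes sign infinitely often: {ν : f(ν) > 0} and {ν : f(ν) < 0} are both infinite. -/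
open Filter Set

lemma aux_dense (β : ℝ) (hβ : Irrational (β / (2 * Real.pi))) :
    DenseRange (fun m : ℤ => m • (β : Real.Angle)) := by
  have h2pi : (2 * Real.pi) ≠ 0 := by positivity
  have hS : Dense ((AddSubgroup.closure {β, 2 * Real.pi} : AddSubgroup ℝ) : Set ℝ) := by
    rcases (AddSubgroup.closure {β, 2 * Real.pi}).dense_or_cyclic with h | ⟨a, ha⟩
    · exact h
    · exfalso
      have hb : β ∈ AddSubgroup.closure ({a} : Set ℝ) := by
        rw [← ha]; exact AddSubgroup.subset_closure (by simp)
      have hp : (2 * Real.pi) ∈ AddSubgroup.closure ({a} : Set ℝ) := by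
        rw [← ha]; exact AddSubgroup.subset_closure (by simp)
      rw [AddSubgroup.mem_closure_singleton] at hb hp
      obtain ⟨m, hm⟩ := hb
      obtain ⟨n, hn⟩ := hp
      rw [zsmul_eq_mul] at hm hn
      have hn0 : (n : ℝ) ≠ 0 := by
        rintro h0
        rw [h0, zero_mul] at hn; exact h2pi hn.symm
      apply hβ.ne_rat ((m : ℚ) / n)
      have : β / (2 * Real.pi) = (m : ℝ) / n := by
        field_simp
        rw [← hm, ← hn]; ring
      rw [this]; push_cast; ring
  -- push density to the circle
  have hq : DenseRange (Real.Angle.coe : ℝ → Real.Angle) := by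
    intro x; induction x using Real.Angle.induction_on
    exact subset_closure (Set.mem_range_self _)
  have himg : Dense ((Real.Angle.coe : ℝ → Real.Angle) ''
      ((AddSubgroup.closure {β, 2 * Real.pi} : AddSubgroup ℝ) : Set ℝ)) :=
    hq.dense_image Real.Angle.continuous_coe hS
  refine himg.mono ?_
  rintro - ⟨x, hx, rfl⟩
  -- every element of the subgroup maps to some m • β
  induction hx using AddSubgroup.closure_induction with
  | mem y hy =>
      rcases hy with rfl | rfl
      · exact ⟨1, by simp⟩
      · exact ⟨0, by simp [Real.Angle.coe_two_pi]⟩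
  | zero => exact ⟨0, by simp⟩
  | add y z hy hz hy' hz' =>
      obtain ⟨my, hmy⟩ := hy'
      obtain ⟨mz, hmz⟩ := hz'
      exact ⟨my + mz, by simp [add_zsmul, hmy, hmz, Real.Angle.coe_add]⟩
  | neg y hy hy' =>
      obtain ⟨my, hmy⟩ := hy'
      exact ⟨-my, by simp [neg_zsmul, hmy, Real.Angle.coe_neg]⟩

lemma aux_cluster (β : ℝ) (hβ : Irrational (β / (2 * Real.pi))) (x : ℝ) (a : Real.Angle) :
    MapClusterPt a atTop (fun n : ℕ => ((x + n * β : ℝ) : Real.Angle)) := by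
  haveI : Fact (0 < 2 * Real.pi) := ⟨by positivity⟩
  haveI : CompactSpace Real.Angle := inferInstanceAs (CompactSpace (AddCircle (2 * Real.pi)))
  have hd := aux_dense β hβ
  have hmem : (a - (x : Real.Angle)) ∈ closure (Set.range (fun n : ℕ => n • (β : Real.Angle))) := by
    rw [← closure_range_zsmul_eq_nsmul]
    have := hd (a - (x : Real.Angle))
    simpa [closure_range_zsmul_eq_nsmul] using this
  have h1 : MapClusterPt (a - (x : Real.Angle)) atTop (fun n : ℕ => n • (β : Real.Angle)) := by
    have := (mapClusterPt_atTop_nsmul_tfae (a - (x : Real.Angle)) (β : Real.Angle)).out 2 0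
    exact this.mp hmem
  have h2 := h1.continuousAt_comp (f := fun z => (x : Real.Angle) + z)
    (by fun_prop)
  simp only [Function.comp_def] at h2
  have hfun : (fun n : ℕ => ((x + n * β : ℝ) : Real.Angle))
      = fun n : ℕ => (x : Real.Angle) + n • (β : Real.Angle) := by
    funext n
    rw [Real.Angle.coe_add]
    congr 1
    induction n with
    | zero => simp
    | succ k ih =>
        push_cast [add_mul, add_smul]
        rw [Real.Angle.coe_add, ih]
        simp
  rw [hfun]
  simpa using h2

lemma aux_signs (β : ℝ) (hβ : Irrational (β / (2 * Real.pi))) (x : ℝ) :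
    {k : ℕ | 0 < Real.sin (x + k * β)}.Infinite ∧
      {k : ℕ | Real.sin (x + k * β) < 0}.Infinite := by
  constructor
  · have h := aux_cluster β hβ x (↑(Real.pi / 2))
    rw [mapClusterPt_iff_frequently] at h
    have hnb : Real.Angle.sin ⁻¹' (Set.Ioi 0) ∈ nhds ((Real.pi / 2 : ℝ) : Real.Angle) := by
      apply Real.Angle.continuous_sin.continuousAt.preimage_mem_nhds
      apply Ioi_mem_nhds
      simp [Real.Angle.sin_coe]
    have := h _ hnb
    rw [Nat.frequently_atTop_iff_infinite] at this
    refine this.mono ?_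
    intro k hk
    simpa only [Set.mem_preimage, Set.mem_Ioi, Set.mem_Iio, Real.Angle.sin_coe] using hk
  · have h := aux_cluster β hβ x (↑(-(Real.pi / 2)))
    rw [mapClusterPt_iff_frequently] at h
    have hnb : Real.Angle.sin ⁻¹' (Set.Iio 0) ∈ nhds ((-(Real.pi / 2) : ℝ) : Real.Angle) := by
      apply Real.Angle.continuous_sin.continuousAt.preimage_mem_nhds
      apply Iio_mem_nhds
      simp [Real.Angle.sin_coe]
    have := h _ hnb
    rw [Nat.frequently_atTop_iff_infinite] at this
    refine this.mono ?_
    intro k hk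
    simpa only [Set.mem_preimage, Set.mem_Ioi, Set.mem_Iio, Real.Angle.sin_coe] using hk

theorem stmt_17 (θ : ℝ) (hθ : θ ∈ Set.Ioo 0 Real.pi)
    (hirr : Irrational (θ / (2 * Real.pi)))
    (t : ℕ) (ht : 1 ≤ t) (c : ℕ → ℝ) (hc : Function.Periodic c t)
    (hcne : ∃ ν, c ν ≠ 0)
    (f : ℕ → ℝ) (hf : ∀ ν, f ν = Real.sin ((ν + 1) * θ) / Real.sin θ * c ν) :
    {ν : ℕ | 0 < f ν}.Infinite ∧ {ν : ℕ | f ν < 0}.Infinite := by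
  obtain ⟨ν₀, hν₀⟩ := hcne
  have hsin : 0 < Real.sin θ := Real.sin_pos_of_pos_of_lt_pi hθ.1 hθ.2
  have hβ : Irrational ((t * θ : ℝ) / (2 * Real.pi)) := by
    have h := hirr.natCast_mul (m := t) (by omega)
    have : (t * θ : ℝ) / (2 * Real.pi) = (t : ℝ) * (θ / (2 * Real.pi)) := by ring
    rwa [this]
  obtain ⟨hP, hN⟩ := aux_signs (t * θ) hβ ((ν₀ + 1) * θ)
  have hval : ∀ k : ℕ, f (ν₀ + k * t) =
      Real.sin (((ν₀ : ℝ) + 1) * θ + k * ((t : ℝ) * θ)) / Real.sin θ * c ν₀ := by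
    intro k
    rw [hf]
    have h1 : (((ν₀ + k * t : ℕ) : ℝ) + 1) * θ
        = ((ν₀ : ℝ) + 1) * θ + k * ((t : ℝ) * θ) := by push_cast; ring
    have h2 : c (ν₀ + k * t) = c ν₀ := (hc.nat_mul k) ν₀
    rw [h1, h2]
  have hinj : Function.Injective (fun k : ℕ => ν₀ + k * t) := by
    intro a b hab
    simp only at hab
    have : a * t = b * t := by omega
    exact Nat.eq_of_mul_eq_mul_right (by omega) this
  have himage : ∀ K : Set ℕ, K.Infinite → ((fun k : ℕ => ν₀ + k * t) '' K).Infinite :=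
    fun K hK => hK.image (hinj.injOn)
  rcases lt_or_gt_of_ne hν₀ with hneg | hpos
  · constructor
    · refine (himage _ hN).mono ?_
      rintro - ⟨k, hk, rfl⟩
      simp only [Set.mem_setOf_eq] at hk ⊢
      rw [hval k]
      exact mul_pos_of_neg_of_neg (div_neg_of_neg_of_pos hk hsin) hneg
    · refine (himage _ hP).mono ?_
      rintro - ⟨k, hk, rfl⟩
      simp only [Set.mem_setOf_eq] at hk ⊢
      rw [hval k]
      exact mul_neg_of_pos_of_neg (div_pos hk hsin) hneg
  · constructor
    · refine (himage _ hP).mono ?_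
      rintro - ⟨k, hk, rfl⟩
      simp only [Set.mem_setOf_eq] at hk ⊢
      rw [hval k]
      exact mul_pos (div_pos hk hsin) hpos
    · refine (himage _ hN).mono ?_
      rintro - ⟨k, hk, rfl⟩
      simp only [Set.mem_setOf_eq] at hk ⊢
      rw [hval k]
      exact mul_neg_of_neg_of_pos (div_neg_of_neg_of_pos hk hsin) hpos
end

section
/- Suppose a power series Σ_{ν≥0} b(ν) x^ν with real nonneggative coefficients b(ν) ≥ 0 for all but finitely many ν is equal, on its disc of convergence, to a rational function R(x) = P(x)/((1−αx)(1−βx)) with P a polynomial and α, β nonreal complex conjugates with |α| = |β| = r > 0, P(1/α) ≠ 0. Then a contradiction arises: such a series must, by Landau's theorem, have a singularity at the real point of its circle of convergence, but R has no real singularity of modulus 1/r. -/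
open FormalMultilinearSeries

lemma aux_hasFPowerSeriesAt (c : ℕ → ℂ) (f : ℂ → ℂ) (ρ : ℝ) (hρ : 0 < ρ)
    (h : ∀ x : ℂ, ‖x‖ < ρ → HasSum (fun ν => c ν * x ^ ν) (f x)) :
    HasFPowerSeriesAt f (FormalMultilinearSeries.ofScalars ℂ c) 0 := by
  set t : ℝ := ρ / 2 with ht
  have htpos : 0 < t := by positivity
  have htρ : t < ρ := by simp [ht]; linarith
  have hsum_t : Summable fun ν => c ν * (t : ℂ) ^ ν := by
    refine (h t ?_).summable
    simpa [Complex.norm_real, abs_of_pos htpos] using htρ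
  have htend : Filter.Tendsto (fun ν => ‖c ν * (t : ℂ) ^ ν‖) Filter.atTop (nhds 0) := by
    simpa using (hsum_t.tendsto_atTop_zero).norm
  obtain ⟨C, hC⟩ := htend.bddAbove_range
  have hC' : ∀ n, ‖c n * (t : ℂ) ^ n‖ ≤ C := fun n => hC ⟨n, rfl⟩
  set s : NNReal := ⟨t, htpos.le⟩ with hs
  have hrad : (s : ENNReal) ≤ (FormalMultilinearSeries.ofScalars ℂ c).radius := by
    apply FormalMultilinearSeries.le_radius_of_bound _ C
    intro n
    have : ‖ofScalars ℂ c n‖ = ‖c n‖ := ofScalars_norm ℂ c n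
    rw [this]
    have := hC' n
    rw [norm_mul, norm_pow, Complex.norm_real, Real.norm_of_nonneg htpos.le] at this
    exact this
  have hball : HasFPowerSeriesOnBall f (FormalMultilinearSeries.ofScalars ℂ c) 0 s := by
    refine ⟨hrad, ENNReal.coe_pos.mpr (show (0:NNReal) < s from NNReal.coe_pos.mp htpos), ?_⟩
    intro y hy
    rw [EMetric.mem_ball, edist_zero_right] at hy
    have hy' : ‖y‖ < ρ := by
      have : ‖y‖ < t := by exact_mod_cast hy
      calc ‖y‖ = ‖y‖ := rfl
        _ < t := this
        _ < ρ := htρ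
    have := h y hy'
    simp only [zero_add]
    have e : (fun n => ofScalars ℂ c n (fun _ => y)) = fun ν => c ν * y ^ ν := by
      funext n
      rw [ofScalars_apply_eq]
      simp [smul_eq_mul]
    rw [e]; exact this
  exact hball.hasFPowerSeriesAt

lemma aux_coeff_unique (c c' : ℕ → ℂ) (f : ℂ → ℂ) (ρ : ℝ) (hρ : 0 < ρ)
    (h : ∀ x : ℂ, ‖x‖ < ρ → HasSum (fun ν => c ν * x ^ ν) (f x))
    (h' : ∀ x : ℂ, ‖x‖ < ρ → HasSum (fun ν => c' ν * x ^ ν) (f x)) : c = c' := by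
  have := (aux_hasFPowerSeriesAt c f ρ hρ h).eq_formalMultilinearSeries
    (aux_hasFPowerSeriesAt c' f ρ hρ h')
  exact ofScalars_series_injective (𝕜 := ℂ) ℂ this

set_option maxHeartbeats 1000000 in
theorem stmt_18 (b : ℕ → ℝ) (hb : ∀ᶠ ν in Filter.atTop, 0 ≤ b ν)
    (P : Polynomial ℂ) (α β : ℂ) (hconj : β = starRingEnd ℂ α)
    (hnonreal : α.im ≠ 0) (r : ℝ) (hr : r = ‖α‖) (hrpos : 0 < r)
    (hβabs : ‖β‖ = r)
    (hPα : P.eval (1 / α) ≠ 0)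
    (hsum : ∀ x : ℂ, ‖x‖ < 1 / r →
      HasSum (fun ν : ℕ => (b ν : ℂ) * x ^ ν)
        (P.eval x / ((1 - α * x) * (1 - β * x)))) :
    False := by
  rw [Filter.eventually_atTop] at hb
  obtain ⟨N₀, hN₀⟩ := hb
  have hρ : (0:ℝ) < 1 / r := by positivity
  have hα0 : α ≠ 0 := by
    intro h; rw [h] at hr; simp at hr; linarith
  have hβ0 : β ≠ 0 := by
    intro h; rw [h] at hβabs; simp at hβabs; linarith
  have hαβ : α ≠ β := by
    intro h
    apply hnonreal
    have : α.im = -α.im := by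
      conv_lhs => rw [h, hconj]
      simp
    linarith
  -- absolute value facts
  have habs : ∀ x : ℂ, ‖x‖ < 1 / r →
      ‖α * x‖ < 1 ∧ ‖β * x‖ < 1 := by
    intro x hx
    constructor
    · rw [norm_mul, ← hr]
      calc r * ‖x‖ < r * (1/r) := by
            exact mul_lt_mul_of_pos_left hx hrpos
        _ = 1 := by field_simp
    · rw [norm_mul, hβabs]
      calc r * ‖x‖ < r * (1/r) := by
            exact mul_lt_mul_of_pos_left hx hrpos
        _ = 1 := by field_simp
  have hD : ∀ x : ℂ, ‖x‖ < 1 / r →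
      (1 - α * x) ≠ 0 ∧ (1 - β * x) ≠ 0 := by
    intro x hx
    obtain ⟨h1, h2⟩ := habs x hx
    constructor
    · intro h
      have : α * x = 1 := by linear_combination -h
      rw [this] at h1; simp at h1
    · intro h
      have : β * x = 1 := by linear_combination -h
      rw [this] at h2; simp at h2
  -- coefficient sequence of (1-αx)(1-βx)·f
  obtain ⟨c, hcdef⟩ : ∃ c : ℕ → ℂ, c = fun ν => (b ν : ℂ) - (α + β) * (if ν < 1 then 0 else (b (ν-1) : ℂ))
      + α * β * (if ν < 2 then 0 else (b (ν-2) : ℂ)) := ⟨_, rfl⟩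
  have hc : ∀ x : ℂ, ‖x‖ < 1 / r → HasSum (fun ν => c ν * x ^ ν) (P.eval x) := by
    intro x hx
    have h0 := hsum x hx
    set S := P.eval x / ((1 - α * x) * (1 - β * x)) with hS
    have h1 : HasSum (fun ν => (if ν < 1 then 0 else (b (ν-1) : ℂ)) * x ^ ν) (x * S) := by
      have h1' : HasSum (fun ν => (if ν + 1 < 1 then 0 else (b (ν+1-1) : ℂ)) * x ^ (ν+1)) (x * S) := by
        have := h0.mul_left x
        convert this using 2 with ν
        rfl
        simp; ring
      have := (hasSum_nat_add_iff (f := fun ν => (if ν < 1 then 0 else (b (ν-1) : ℂ)) * x ^ ν) 1).mp h1'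
      simpa using this
    have h2 : HasSum (fun ν => (if ν < 2 then 0 else (b (ν-2) : ℂ)) * x ^ ν) (x^2 * S) := by
      have h2' : HasSum (fun ν => (if ν + 2 < 2 then 0 else (b (ν+2-2) : ℂ)) * x ^ (ν+2)) (x^2 * S) := by
        have := h0.mul_left (x^2)
        convert this using 2 with ν
        rfl
        simp; ring
      have := (hasSum_nat_add_iff (f := fun ν => (if ν < 2 then 0 else (b (ν-2) : ℂ)) * x ^ ν) 2).mp h2'
      simpa [Finset.sum_range_succ] using this
    have hcomb := (h0.sub (h1.mul_left (α + β))).add (h2.mul_left (α * β))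
    have hval : S - (α + β) * (x * S) + α * β * (x^2 * S) = P.eval x := by
      obtain ⟨hD1, hD2⟩ := hD x hx
      have : S * ((1 - α * x) * (1 - β * x)) = P.eval x :=
        div_mul_cancel₀ _ (mul_ne_zero hD1 hD2)
      linear_combination this
    rw [hval] at hcomb
    convert hcomb using 2 with ν
    rfl
    simp only [hcdef]
    ring
  have hc' : ∀ x : ℂ, ‖x‖ < 1 / r →
      HasSum (fun ν => P.coeff ν * x ^ ν) (P.eval x) := by
    intro x _
    have he : P.eval x = ∑ ν ∈ Finset.range (P.natDegree + 1), P.coeff ν * x ^ ν := by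
      rw [Polynomial.eval_eq_sum_range]
    rw [he]
    apply hasSum_sum_of_ne_finset_zero
    intro ν hν
    have : P.natDegree < ν := by
      simp only [Finset.mem_range, not_lt] at hν; omega
    rw [Polynomial.coeff_eq_zero_of_natDegree_lt this, zero_mul]
  have hcc : c = fun ν => P.coeff ν :=
    aux_coeff_unique c _ _ (1/r) hρ hc hc'
  -- the recurrence
  obtain ⟨N, hNdef⟩ : ∃ N : ℕ, N = max (P.natDegree + 1) N₀ := ⟨_, rfl⟩
  have hNd : P.natDegree < N := by rw [hNdef]; exact lt_of_lt_of_le (Nat.lt_succ_self _) (le_max_left _ _)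
  have hNN₀ : N₀ ≤ N := by rw [hNdef]; exact le_max_right _ _
  have hrec : ∀ m : ℕ, N ≤ m → (b (m+2) : ℂ) = (α + β) * (b (m+1) : ℂ) - α * β * (b m : ℂ) := by
    intro m hm
    have h1 : c (m+2) = P.coeff (m+2) := congrFun hcc (m+2)
    have h2 : P.coeff (m+2) = 0 :=
      Polynomial.coeff_eq_zero_of_natDegree_lt (by omega)
    rw [h2, hcdef] at h1
    simp only [show ¬ (m+2 < 1) from by omega, show ¬ (m+2 < 2) from by omega, if_false] at h1
    simp only [show m+2-1 = m+1 from by omega, show m+2-2 = m from by omega] at h1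
    linear_combination h1
  -- solve the recurrence
  obtain ⟨A, hAdef⟩ : ∃ A : ℂ, A = ((b (N+1) : ℂ) - β * (b N : ℂ)) / (α ^ N * (α - β)) := ⟨_, rfl⟩
  obtain ⟨B, hBdef⟩ : ∃ B : ℂ, B = ((b (N+1) : ℂ) - α * (b N : ℂ)) / (β ^ N * (β - α)) := ⟨_, rfl⟩
  have hαβ' : α - β ≠ 0 := sub_ne_zero.mpr hαβ
  have hβα' : β - α ≠ 0 := sub_ne_zero.mpr (Ne.symm hαβ)
  have hA0 : A * α ^ N + B * β ^ N = (b N : ℂ) := by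
    rw [hAdef, hBdef]
    field_simp
    ring
  have hA1 : A * α ^ (N+1) + B * β ^ (N+1) = (b (N+1) : ℂ) := by
    rw [hAdef, hBdef]
    field_simp
    ring
  have key : ∀ k : ℕ, ((b (N+k) : ℂ) = A * α ^ (N+k) + B * β ^ (N+k)) ∧
      ((b (N+k+1) : ℂ) = A * α ^ (N+k+1) + B * β ^ (N+k+1)) := by
    intro k
    induction k with
    | zero => exact ⟨hA0.symm, hA1.symm⟩
    | succ k ih =>
      refine ⟨ih.2, ?_⟩
      have hr2 := hrec (N + k) (Nat.le_add_right _ _)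
      have e1 : N + (k+1) + 1 = (N + k) + 2 := by omega
      have e2 : N + (k+1) = (N + k) + 1 := by omega
      rw [e1, hr2, ih.1, ih.2]
      ring
  have hAB : ∀ k : ℕ, (b (N+k) : ℂ) = A * α ^ (N+k) + B * β ^ (N+k) := fun k => (key k).1
  -- A ≠ 0 via boundary limit
  obtain ⟨Q, hQdef⟩ : ∃ Q : ℂ → ℂ, Q = fun x => ∑ ν ∈ Finset.range N, (b ν : ℂ) * x ^ ν := ⟨_, rfl⟩
  obtain ⟨G, hGdef⟩ : ∃ G : ℂ → ℂ, G = fun x => (1 - α*x) * (1 - β*x) * Q x + A * (α*x)^N * (1 - β*x)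
      + B * (β*x)^N * (1 - α*x) := ⟨_, rfl⟩
  have hEq : Set.EqOn (fun x : ℂ => P.eval x) G (Metric.ball (0:ℂ) (1/r)) := by
    intro x hx
    have hx' : ‖x‖ < 1/r := by
      rw [Metric.mem_ball, dist_zero_right] at hx; exact hx
    obtain ⟨hD1, hD2⟩ := hD x hx'
    obtain ⟨ha1, ha2⟩ := habs x hx'
    have h0 := hsum x hx'
    set S := P.eval x / ((1 - α * x) * (1 - β * x)) with hS
    have htail : HasSum (fun k => (b (k+N) : ℂ) * x ^ (k+N)) (S - Q x) := by
      refine (hasSum_nat_add_iff (f := fun ν => (b ν : ℂ) * x ^ ν) N).mpr ?_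
      rw [hQdef]
      simp only
      rw [sub_add_cancel]
      exact h0
    have hg1 : HasSum (fun k => (A * (α*x)^N) * (α*x)^k) ((A * (α*x)^N) * (1 - α*x)⁻¹) :=
      (hasSum_geometric_of_norm_lt_one (ξ := α*x) (by exact ha1)).mul_left _
    have hg2 : HasSum (fun k => (B * (β*x)^N) * (β*x)^k) ((B * (β*x)^N) * (1 - β*x)⁻¹) :=
      (hasSum_geometric_of_norm_lt_one (ξ := β*x) (by exact ha2)).mul_left _
    have hg := hg1.add hg2
    have heq2 : (fun k => (b (k+N) : ℂ) * x ^ (k+N))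
        = fun k => (A * (α*x)^N) * (α*x)^k + (B * (β*x)^N) * (β*x)^k := by
      funext k
      rw [Nat.add_comm k N, hAB k]
      ring
    rw [heq2] at htail
    have hu := htail.unique hg
    have hPx : P.eval x = S * ((1 - α*x)*(1 - β*x)) :=
      (div_mul_cancel₀ _ (mul_ne_zero hD1 hD2)).symm
    show P.eval x = G x
    rw [hPx, hGdef]
    have hSx : S = Q x + (A * (α*x)^N) * (1 - α*x)⁻¹ + (B * (β*x)^N) * (1 - β*x)⁻¹ := by
      linear_combination hu
    rw [hSx]
    have i1 : (1 - α*x) * (1 - α*x)⁻¹ = 1 := mul_inv_cancel₀ hD1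
    have i2 : (1 - β*x) * (1 - β*x)⁻¹ = 1 := mul_inv_cancel₀ hD2
    show _ = (1 - α*x) * (1 - β*x) * Q x + A * (α*x)^N * (1 - β*x) + B * (β*x)^N * (1 - α*x)
    linear_combination (A*(α*x)^N*(1-β*x)) * i1 + (B*(β*x)^N*(1-α*x)) * i2
  have hcont1 : Continuous (fun x : ℂ => P.eval x) := P.continuous
  have hcont2 : Continuous G := by
    rw [hGdef]
    have hQc : Continuous Q := by
      rw [hQdef]
      exact continuous_finset_sum _ (fun i _ => (continuous_const.mul (continuous_pow i)))
    fun_prop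
  have hclos := hEq.closure hcont1 hcont2
  have hmem : (1/α) ∈ closure (Metric.ball (0:ℂ) (1/r)) := by
    rw [closure_ball (0:ℂ) (ne_of_gt hρ), Metric.mem_closedBall, dist_zero_right]
    rw [norm_div, norm_one, ← hr]
  have hval := hclos hmem
  simp only at hval
  have einv : α * (1/α) = 1 := mul_one_div_cancel hα0
  have hGα : G (1/α) = A * (1 - β * (1/α)) := by
    rw [hGdef]
    simp only [einv]
    simp
  have hA : A ≠ 0 := by
    intro h
    apply hPα
    rw [hval, hGα, h, zero_mul]
  -- conjugation symmetry : B = conj A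
  have hconjα : (starRingEnd ℂ) α = β := hconj.symm
  have hconjβ : (starRingEnd ℂ) β = α := by rw [hconj, Complex.conj_conj]
  have hreal : ∀ k : ℕ, (starRingEnd ℂ) A * β ^ (N+k) + (starRingEnd ℂ) B * α ^ (N+k)
      = A * α ^ (N+k) + B * β ^ (N+k) := by
    intro k
    have h1 := hAB k
    have h2 := congrArg (starRingEnd ℂ) h1
    rw [Complex.conj_ofReal, map_add, map_mul, map_mul, map_pow, map_pow, hconjα, hconjβ] at h2
    rw [← h2, ← h1]
  have f0 : (A - (starRingEnd ℂ) B) * α ^ N = ((starRingEnd ℂ) A - B) * β ^ N := by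
    have e0 := hreal 0
    rw [Nat.add_zero] at e0
    linear_combination - e0
  have f1 : (A - (starRingEnd ℂ) B) * α ^ (N+1) = ((starRingEnd ℂ) A - B) * β ^ (N+1) := by
    linear_combination - (hreal 1)
  have hBA : B = (starRingEnd ℂ) A := by
    have h3 : ((starRingEnd ℂ) A - B) * β ^ N * (α - β) = 0 := by
      linear_combination f1 - α * f0
    rcases mul_eq_zero.mp h3 with h4 | h4
    · rcases mul_eq_zero.mp h4 with h5 | h5
      · exact (sub_eq_zero.mp h5).symm
      · exact absurd h5 (pow_ne_zero _ hβ0)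
    · exact absurd h4 hαβ'
  -- real form of coefficients
  have hre : ∀ k : ℕ, b (N+k) = 2 * (A * α ^ (N+k)).re := by
    intro k
    have h1 := hAB k
    rw [hBA] at h1
    have h2 : (starRingEnd ℂ) A * β ^ (N+k) = (starRingEnd ℂ) (A * α ^ (N+k)) := by
      rw [map_mul, map_pow, hconjα]
    rw [h2, Complex.add_conj] at h1
    exact_mod_cast h1
  -- normalized sequence
  obtain ⟨ζ, hζdef⟩ : ∃ ζ : ℂ, ζ = α / (r:ℝ) := ⟨_, rfl⟩
  have hζabs : ‖ζ‖ = 1 := by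
    rw [hζdef, norm_div, Complex.norm_real, Real.norm_of_nonneg hrpos.le, ← hr, div_self (ne_of_gt hrpos)]
  have hζim : ζ.im ≠ 0 := by
    rw [hζdef, Complex.div_ofReal_im]
    exact div_ne_zero hnonreal (ne_of_gt hrpos)
  have hζ1 : ζ ≠ 1 := fun h => hζim (by rw [h]; simp)
  have hζ2 : ζ^2 ≠ 1 := by
    intro h
    have h' : (ζ - 1) * (ζ + 1) = 0 := by linear_combination h
    rcases mul_eq_zero.mp h' with h4 | h4
    · exact hζ1 (by linear_combination h4)
    · apply hζim
      have : ζ = -1 := by linear_combination h4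
      rw [this]; simp
  obtain ⟨w, hwdef⟩ : ∃ w : ℂ, w = A * α ^ N := ⟨_, rfl⟩
  have hw : w ≠ 0 := by rw [hwdef]; exact mul_ne_zero hA (pow_ne_zero _ hα0)
  have hwabs : 0 < ‖w‖ := norm_pos_iff.mpr hw
  obtain ⟨v, hvdef⟩ : ∃ v : ℕ → ℝ, v = fun k => (w * ζ ^ k).re := ⟨_, rfl⟩
  have hvnonneg : ∀ k, 0 ≤ v k := by
    intro k
    have hrk : ((r:ℂ))^k ≠ 0 := pow_ne_zero _ (by exact_mod_cast ne_of_gt hrpos)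
    have e : w * ζ ^ k = (A * α ^ (N+k)) / ((r^k : ℝ) : ℂ) := by
      rw [hwdef, hζdef, div_pow, pow_add]
      push_cast
      field_simp
    simp only [hvdef]
    rw [e, Complex.div_ofReal_re]
    apply div_nonneg _ (pow_nonneg hrpos.le k)
    have hb2 := hN₀ (N+k) (le_trans hNN₀ (Nat.le_add_right _ _))
    rw [hre k] at hb2
    linarith
  have hvle : ∀ k, v k ≤ ‖w‖ := by
    intro k
    rw [hvdef]
    calc (w * ζ^k).re ≤ ‖w * ζ^k‖ := Complex.re_le_norm _
      _ = ‖w‖ := by rw [norm_mul, norm_pow, hζabs, one_pow, mul_one]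
  have habs1 : 0 < ‖ζ - 1‖ := norm_pos_iff.mpr (sub_ne_zero.mpr hζ1)
  have habs2 : 0 < ‖ζ^2 - 1‖ := norm_pos_iff.mpr (sub_ne_zero.mpr hζ2)
  have hbound : ∀ (u : ℂ) (M : ℕ), ‖u^M - 1‖ ≤ 2 → True := fun _ _ _ => trivial
  have hgeomabs : ∀ M : ℕ, ‖ζ^M - 1‖ ≤ 2 := by
    intro M
    calc ‖ζ^M - 1‖ ≤ ‖ζ^M‖ + ‖(1:ℂ)‖ := by
          have := norm_sub_le (ζ^M) (1:ℂ)
          simpa using this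
      _ = 2 := by rw [norm_pow, hζabs, one_pow, norm_one]; norm_num
  have hgeomabs2 : ∀ M : ℕ, ‖(ζ^2)^M - 1‖ ≤ 2 := by
    intro M
    calc ‖(ζ^2)^M - 1‖ ≤ ‖(ζ^2)^M‖ + ‖(1:ℂ)‖ := by
          have := norm_sub_le ((ζ^2)^M) (1:ℂ)
          simpa using this
      _ = 2 := by rw [norm_pow, norm_pow, hζabs, one_pow, one_pow, norm_one]; norm_num
  have hsum1 : ∀ M : ℕ, ∑ k ∈ Finset.range M, v k
      ≤ ‖w‖ * (2 / ‖ζ - 1‖) := by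
    intro M
    have e1 : ∑ k ∈ Finset.range M, w * ζ ^ k = w * ((ζ^M - 1) / (ζ - 1)) := by
      rw [← Finset.mul_sum, geom_sum_eq hζ1]
    have e2 : ∑ k ∈ Finset.range M, v k = (∑ k ∈ Finset.range M, w * ζ ^ k).re := by
      rw [Complex.re_sum]
      simp only [hvdef]
    rw [e2, e1]
    calc (w * ((ζ^M - 1) / (ζ - 1))).re ≤ ‖w * ((ζ^M - 1) / (ζ - 1))‖ :=
          Complex.re_le_norm _
      _ = ‖w‖ * (‖ζ^M - 1‖ / ‖ζ - 1‖) := by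
          rw [norm_mul, norm_div]
      _ ≤ ‖w‖ * (2 / ‖ζ - 1‖) := by
          apply mul_le_mul_of_nonneg_left _ (norm_nonneg _)
          exact (div_le_div_iff_of_pos_right habs1).mpr (hgeomabs M)
  -- lower bound for sum of squares
  have hterm : ∀ k : ℕ, (v k)^2 = ((‖w‖)^2 + (w^2 * (ζ^2)^k).re) / 2 := by
    intro k
    have h1 : w^2 * (ζ^2)^k = (w * ζ^k) * (w * ζ^k) := by ring
    have h2 : ‖w * ζ^k‖ = ‖w‖ := by
      rw [norm_mul, norm_pow, hζabs, one_pow, mul_one]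
    simp only [hvdef]
    rw [h1, ← h2, Complex.sq_norm]
    simp only [Complex.normSq_apply, Complex.mul_re]
    ring
  have hsum2 : ∀ M : ℕ, (M:ℝ) * (‖w‖)^2 / 2
      - (‖w‖)^2 / ‖ζ^2 - 1‖ ≤ ∑ k ∈ Finset.range M, (v k)^2 := by
    intro M
    have e2 : ∑ k ∈ Finset.range M, (v k)^2
        = ((M:ℝ) * (‖w‖)^2 + (w^2 * ∑ k ∈ Finset.range M, (ζ^2)^k).re) / 2 := by
      calc ∑ k ∈ Finset.range M, (v k)^2
          = ∑ k ∈ Finset.range M, ((‖w‖)^2 + (w^2 * (ζ^2)^k).re) / 2 :=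
            Finset.sum_congr rfl (fun k _ => hterm k)
        _ = (∑ k ∈ Finset.range M, ((‖w‖)^2 + (w^2 * (ζ^2)^k).re)) / 2 := by
            rw [Finset.sum_div]
        _ = ((M:ℝ) * (‖w‖)^2 + (w^2 * ∑ k ∈ Finset.range M, (ζ^2)^k).re) / 2 := by
            rw [Finset.sum_add_distrib, Finset.sum_const, Finset.card_range, nsmul_eq_mul,
              ← Complex.re_sum, ← Finset.mul_sum]
    rw [e2]
    have hgeq : ∑ k ∈ Finset.range M, (ζ^2)^k = ((ζ^2)^M - 1) / (ζ^2 - 1) := geom_sum_eq hζ2 M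
    have hrebd : -( (‖w‖)^2 * (2 / ‖ζ^2 - 1‖))
        ≤ (w^2 * ∑ k ∈ Finset.range M, (ζ^2)^k).re := by
      have h5 : ‖w^2 * ∑ k ∈ Finset.range M, (ζ^2)^k‖
          ≤ (‖w‖)^2 * (2 / ‖ζ^2 - 1‖) := by
        rw [hgeq, norm_mul, norm_pow, norm_div]
        apply mul_le_mul_of_nonneg_left _ (by positivity)
        exact (div_le_div_iff_of_pos_right habs2).mpr (hgeomabs2 M)
      have h6 := Complex.abs_re_le_norm (w^2 * ∑ k ∈ Finset.range M, (ζ^2)^k)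
      have h7 := abs_le.mp (le_trans h6 h5)
      linarith [h7.1]
    have hzpos : (0:ℝ) < ‖ζ^2-1‖ := habs2
    have : (‖w‖)^2 * (2 / ‖ζ^2 - 1‖)
        = 2 * ((‖w‖)^2 / ‖ζ^2 - 1‖) := by ring
    rw [this] at hrebd
    linarith
  -- combine
  have hfinal : ∀ M : ℕ, (M:ℝ) * (‖w‖)^2 / 2
      - (‖w‖)^2 / ‖ζ^2-1‖
      ≤ ‖w‖ * (‖w‖ * (2 / ‖ζ - 1‖)) := by
    intro M
    have h1 : ∑ k ∈ Finset.range M, (v k)^2 ≤ ‖w‖ * ∑ k ∈ Finset.range M, v k := by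
      rw [Finset.mul_sum]
      apply Finset.sum_le_sum
      intro k _
      have ha := hvle k
      have hb' := hvnonneg k
      nlinarith
    have h2 := hsum1 M
    have h3 := hsum2 M
    have h4 : ‖w‖ * ∑ k ∈ Finset.range M, v k
        ≤ ‖w‖ * (‖w‖ * (2 / ‖ζ-1‖)) :=
      mul_le_mul_of_nonneg_left h2 (norm_nonneg _)
    linarith
  obtain ⟨z1, hz1⟩ : ∃ z1 : ℝ, z1 = ‖ζ-1‖ := ⟨_, rfl⟩
  obtain ⟨z2, hz2⟩ : ∃ z2 : ℝ, z2 = ‖ζ^2-1‖ := ⟨_, rfl⟩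
  obtain ⟨aw, hawdef⟩ : ∃ aw : ℝ, aw = ‖w‖ := ⟨_, rfl⟩
  have hz1pos : 0 < z1 := hz1 ▸ habs1
  have hz2pos : 0 < z2 := hz2 ▸ habs2
  have hawpos : 0 < aw := hawdef ▸ hwabs
  obtain ⟨M, hM⟩ := exists_nat_gt (4 / z1 + 2 / z2)
  have hfM := hfinal M
  rw [← hz1, ← hz2, ← hawdef] at hfM
  have hlt : (4/z1 + 2/z2) * (aw^2/2) < (M:ℝ) * (aw^2/2) :=
    mul_lt_mul_of_pos_right hM (by positivity)
  have he1 : (4/z1 + 2/z2) * (aw^2/2) = aw*(aw*(2/z1)) + aw^2/z2 := by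
    field_simp
    ring
  have hform : (M:ℝ)*(aw^2/2) = (M:ℝ)*aw^2/2 := by ring
  linarith
end
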